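/- Along solutions of the error system of γ-Observer 2, v̄' = g(e₃ − γ̄) − k₁ᵛ v̄ + k₂ᵛ γ̄ × (γ̄ × v̄) + k₁ʳ v̄ × (v̄ × γ̄), γ̄' = −k₁ʳ γ̄ × (γ̄ × v̄) with |γ̄| = 1, the cross product satisfies d/dt (v̄ × γ̄) = g (e₃ × γ̄) − (k₁ᵛ + k₂ᵛ)(v̄ × γ̄). -/

import Mathlib

open Matrix

noncomputable section

def cross3 (u v : Fin 3 → ℝ) : Fin 3 → ℝ :=
  ![u 1 * v 2 - u 2 * v 1, u 2 * v 0 - u 0 * v 2, u 0 * v 1 - u 1 * v 0]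

def norm3 (u : Fin 3 → ℝ) : ℝ := Real.sqrt (u ⬝ᵥ u)

def e3 : Fin 3 → ℝ := ![0, 0, 1]

/-- along the error system of `γ`-Observer 2,
`d/dt (v̄ × γ̄) = g (e₃ × γ̄) − (k₁ᵛ + k₂ᵛ)(v̄ × γ̄)`. -/
theorem stmt_8 (g k1v k2v k1r : ℝ) (hg : 0 < g) (h1 : 0 < k1v) (h2 : 0 < k2v)
    (h3 : 0 < k1r) (v γ : ℝ → Fin 3 → ℝ)
    (hγunit : ∀ t, norm3 (γ t) = 1)
    (hv : ∀ t, HasDerivAt v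
      (g • (e3 - γ t) - k1v • v t + k2v • cross3 (γ t) (cross3 (γ t) (v t))
        + k1r • cross3 (v t) (cross3 (v t) (γ t))) t)
    (hγ : ∀ t, HasDerivAt γ (-(k1r • cross3 (γ t) (cross3 (γ t) (v t)))) t) :
    ∀ t, HasDerivAt (fun s => cross3 (v s) (γ s))
      (g • cross3 e3 (γ t) - (k1v + k2v) • cross3 (v t) (γ t)) t := by
  intro t
  have hq : γ t 0 ^ 2 + γ t 1 ^ 2 + γ t 2 ^ 2 = 1 := by
    have := hγunit t
    simp only [norm3, dotProduct, Fin.sum_univ_three, Real.sqrt_eq_one] at this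
    nlinarith [this]
  have hvi := hasDerivAt_pi.mp (hv t)
  have hγi := hasDerivAt_pi.mp (hγ t)
  have hv0 := hvi 0; have hv1 := hvi 1; have hv2 := hvi 2
  have hγ0 := hγi 0; have hγ1 := hγi 1; have hγ2 := hγi 2
  simp only [cross3, e3, Pi.add_apply, Pi.sub_apply, Pi.smul_apply, Pi.neg_apply,
    smul_eq_mul, Matrix.cons_val_zero, Matrix.cons_val_one, Matrix.head_cons,
    Matrix.cons_val_two, Matrix.tail_cons] at hv0 hv1 hv2 hγ0 hγ1 hγ2
  rw [hasDerivAt_pi]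
  intro i
  fin_cases i <;>
    simp only [cross3, e3, Pi.sub_apply, Pi.smul_apply, smul_eq_mul, Fin.zero_eta,
      Fin.mk_one, Fin.reduceFinMk, Fin.isValue, Matrix.cons_val_zero, Matrix.cons_val_one, Matrix.head_cons,
      Matrix.cons_val_two, Matrix.tail_cons]
  · convert (hv1.mul hγ2).sub (hv2.mul hγ1) using 1
    · rfl
    linear_combination (k2v * (v t 1 * γ t 2 - v t 2 * γ t 1)) * hq
  · convert (hv2.mul hγ0).sub (hv0.mul hγ2) using 1
    · rfl
    linear_combination (k2v * (v t 2 * γ t 0 - v t 0 * γ t 2)) * hq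
  · convert (hv0.mul hγ1).sub (hv1.mul hγ0) using 1
    · rfl
    linear_combination (k2v * (v t 0 * γ t 1 - v t 1 * γ t 0)) * hq
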